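/- Let C ⊆ V be independent in G. For each x ∈ V∖C, the inequality p_x ≥ 0 defines a facet of M(G,C), i.e., the face {p ∈ M(G,C) : p_x = 0} has dimension |V| - 2. -/

import Mathlib

open scoped Classical

/-- The polytope of `C`-modes of a graph `G`, inside the probability simplex. -/
def modePolytope {V : Type*} [Fintype V] (G : SimpleGraph V) (C : Set V) :
    Set (V → ℝ) :=
  {p | (∀ v, 0 ≤ p v) ∧ (∑ v, p v = 1) ∧ ∀ x ∈ C, ∀ y, G.Adj x y → p y ≤ p x}

/-- The affine dimension of a subset of `V → ℝ`, with `dim ∅ = -1`. -/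
noncomputable def affDim {V : Type*} (s : Set (V → ℝ)) : ℤ :=
  if s = ∅ then -1 else (Module.finrank ℝ (affineSpan ℝ s).direction : ℤ)

/-- Auxiliary linear map `p ↦ (∑ p, p x)`. -/
noncomputable def sumEvalMap {V : Type*} [Fintype V] (x : V) : (V → ℝ) →ₗ[ℝ] ℝ × ℝ where
  toFun p := (∑ v, p v, p x)
  map_add' p q := by simp [Finset.sum_add_distrib]
  map_smul' c p := by simp [Finset.mul_sum]

set_option maxHeartbeats 1600000 in
/-- For an independent `C` and `x ∉ C`, the inequality `p x ≥ 0` defines a facet of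
the mode polytope: the corresponding face has dimension `|V| - 2`. -/
theorem positivity_facet_of_modePolytope {V : Type*} [Fintype V]
    (G : SimpleGraph V) (C : Set V)
    (hInd : ∀ x ∈ C, ∀ y ∈ C, ¬ G.Adj x y) (x : V) (hx : x ∉ C) :
    affDim {p | p ∈ modePolytope G C ∧ p x = 0} = (Fintype.card V : ℤ) - 2 := by
  classical
  set F : Set (V → ℝ) := {p | p ∈ modePolytope G C ∧ p x = 0} with hFdef
  rcases le_or_gt (Fintype.card V) 1 with hn | hn
  · -- degenerate case |V| = 1 : the face is empty
    have hcard : Fintype.card V = 1 := le_antisymm hn (Fintype.card_pos_iff.mpr ⟨x⟩)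
    have hall : ∀ v : V, v = x := fun v => Fintype.card_le_one_iff.mp hn v x
    have hFe : F = ∅ := by
      ext p
      simp only [Set.mem_empty_iff_false, iff_false, hFdef, Set.mem_setOf_eq,
        modePolytope]
      rintro ⟨⟨_, hsum, _⟩, hpx⟩
      have h0 : (∑ v, p v) = 0 := by
        rw [Finset.sum_congr rfl (fun v _ => by rw [hall v, hpx])]
        simp
      rw [h0] at hsum
      norm_num at hsum
    simp only [affDim, hFe, if_pos rfl, hcard]
    norm_num
  · -- main case |V| ≥ 2
    obtain ⟨u, hu⟩ := Fintype.exists_ne_of_one_lt_card hn x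
    -- the linear map p ↦ (∑ p, p x)
    set L : (V → ℝ) →ₗ[ℝ] ℝ × ℝ := sumEvalMap x with hLdef
    have hLapp : ∀ p : V → ℝ, L p = (∑ v, p v, p x) := fun p => rfl
    have hsurj : Function.Surjective L := by
      rintro ⟨a, b⟩
      refine ⟨(Pi.single x b : V → ℝ) + (Pi.single u (a - b) : V → ℝ), ?_⟩
      have h1 : ∑ v, ((Pi.single x b : V → ℝ) + (Pi.single u (a - b) : V → ℝ)) v = a := by
        simp [Finset.sum_add_distrib, Finset.sum_pi_single']
      have h2 : ((Pi.single x b : V → ℝ) + (Pi.single u (a - b) : V → ℝ)) x = b := by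
        simp [Pi.single_eq_of_ne (Ne.symm hu)]
      rw [hLapp, h1, h2]
    have hker : Module.finrank ℝ (LinearMap.ker L) = Fintype.card V - 2 := by
      have h := LinearMap.finrank_range_add_finrank_ker L
      rw [LinearMap.range_eq_top.mpr hsurj, finrank_top] at h
      have h2 : Module.finrank ℝ (ℝ × ℝ) = 2 := by
        simp
      have h3 : Module.finrank ℝ (V → ℝ) = Fintype.card V := by
        simp [Module.finrank_fintype_fun_eq_card]
      rw [h2, h3] at h
      omega
    -- the base point
    set r : V → ℝ := fun v => if v = x then 0 else if v ∈ C then 2 else 1 with hrdef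
    have hr0 : ∀ v, 0 ≤ r v := by
      intro v
      simp only [hrdef]
      split_ifs <;> norm_num
    have hru : (1 : ℝ) ≤ r u := by
      simp only [hrdef, if_neg hu]
      split_ifs <;> norm_num
    set s : ℝ := ∑ v, r v with hsdef
    have hs1 : (1 : ℝ) ≤ s :=
      le_trans hru (Finset.single_le_sum (fun v _ => hr0 v) (Finset.mem_univ u))
    have hs0 : 0 < s := by linarith
    have hsinv0 : 0 < s⁻¹ := inv_pos.mpr hs0
    set q : V → ℝ := fun v => s⁻¹ * r v with hqdef
    have hqx : q x = 0 := by simp [hqdef, hrdef]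
    have hqsum : ∑ v, q v = 1 := by
      simp only [hqdef]
      rw [← Finset.mul_sum, ← hsdef, inv_mul_cancel₀ hs0.ne']
    have hq_lb : ∀ v, v ≠ x → s⁻¹ ≤ q v := by
      intro v hv
      have hrv : (1 : ℝ) ≤ r v := by
        simp only [hrdef, if_neg hv]
        split_ifs <;> norm_num
      calc s⁻¹ = s⁻¹ * 1 := by ring
        _ ≤ s⁻¹ * r v := by nlinarith
    have hgap : ∀ a ∈ C, ∀ y, G.Adj a y → q y + s⁻¹ ≤ q a := by
      intro a ha y hadj
      have hax : a ≠ x := fun h => hx (h ▸ ha)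
      have hra : r a = 2 := by simp [hrdef, if_neg hax, ha]
      have hry : r y ≤ 1 := by
        by_cases hyx : y = x
        · simp [hrdef, hyx]
        · by_cases hyC : y ∈ C
          · exact absurd hadj (hInd a ha y hyC)
          · simp [hrdef, hyx, hyC]
      simp only [hqdef, hra]
      nlinarith
    -- membership of perturbed points
    have hmem : ∀ w : V → ℝ, (∑ v, w v) = 0 → w x = 0 → ∀ ε : ℝ, 0 ≤ ε →
        (∀ v, ε * |w v| ≤ s⁻¹ / 2) → (fun v => q v + ε * w v) ∈ F := by
      intro w hwsum hwx ε hε hεb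
      simp only [hFdef, Set.mem_setOf_eq, modePolytope]
      refine ⟨⟨?_, ?_, ?_⟩, ?_⟩
      · intro v
        by_cases hv : v = x
        · subst hv; simp [hqx, hwx]
        · have h1 := hq_lb v hv
          have h2 := hεb v
          have h3 : -(ε * |w v|) ≤ ε * w v := by
            nlinarith [neg_abs_le (w v), abs_nonneg (w v)]
          linarith
      · rw [Finset.sum_add_distrib, hqsum, ← Finset.mul_sum, hwsum]
        ring
      · intro a ha y hadj
        have hg := hgap a ha y hadj
        have h1 : ε * w y ≤ ε * |w y| := by nlinarith [le_abs_self (w y)]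
        have h2 : -(ε * |w a|) ≤ ε * w a := by
          nlinarith [neg_abs_le (w a)]
        have h3 := hεb y
        have h4 := hεb a
        linarith
      · simp [hqx, hwx]
    have hqF : q ∈ F := by
      have := hmem (fun _ => 0) (by simp) rfl 0 le_rfl (by intro v; simp; positivity)
      convert this using 1
      funext v
      simp
    -- direction of the affine span is the kernel of L
    have hdir : (affineSpan ℝ F).direction = LinearMap.ker L := by
      apply le_antisymm
      · rw [direction_affineSpan, vectorSpan_def]
        rw [Submodule.span_le]
        rintro w hw
        rw [Set.mem_vsub] at hw
        obtain ⟨p1, hp1, p2, hp2, rfl⟩ := hw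
        simp only [hFdef, Set.mem_setOf_eq, modePolytope] at hp1 hp2
        obtain ⟨⟨_, hsum1, _⟩, hx1⟩ := hp1
        obtain ⟨⟨_, hsum2, _⟩, hx2⟩ := hp2
        have : p1 -ᵥ p2 = p1 - p2 := rfl
        rw [SetLike.mem_coe, LinearMap.mem_ker, this, map_sub, hLapp, hLapp,
          hsum1, hsum2, hx1, hx2]
        simp
      · intro w hw
        rw [LinearMap.mem_ker, hLapp, Prod.mk.injEq] at hw
        obtain ⟨hwsum, hwx⟩ := hw
        set M : ℝ := ‖w‖ with hMdef
        have hM0 : 0 ≤ M := norm_nonneg w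
        set ε : ℝ := s⁻¹ / (2 * (M + 1)) with hεdef
        have hε0 : 0 < ε := by positivity
        have hbound : ∀ v, ε * |w v| ≤ s⁻¹ / 2 := by
          intro v
          have h1 : |w v| ≤ M + 1 := by
            have := norm_le_pi_norm w v
            rw [Real.norm_eq_abs] at this
            linarith
          have h2 : ε * |w v| ≤ ε * (M + 1) := by
            nlinarith [abs_nonneg (w v)]
          have h3 : ε * (M + 1) = s⁻¹ / 2 := by
            rw [hεdef]
            field_simp
          linarith
        have hp2 := hmem w hwsum hwx ε hε0.le hbound
        have heq : w = ε⁻¹ • ((fun v => q v + ε * w v) -ᵥ q) := by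
          funext v
          rw [vsub_eq_sub]
          simp only [Pi.smul_apply, Pi.sub_apply]
          field_simp
          rw [smul_eq_mul, add_sub_cancel_left, one_div, mul_comm (w v) ε, inv_mul_cancel_left₀ hε0.ne']
        rw [heq]
        exact Submodule.smul_mem _ _
          (AffineSubspace.vsub_mem_direction (subset_affineSpan ℝ F hp2)
            (subset_affineSpan ℝ F hqF))
    have hFne : F ≠ ∅ := Set.nonempty_iff_ne_empty.mp ⟨q, hqF⟩
    simp only [affDim, if_neg hFne]
    rw [hdir, hker]
    omega
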